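/- Suppose ν is a probability measure with values in a non-Archimedean field, μ⃗ = (μ_β : β < α) is an LPS, and ν ≈ μ⃗ (they induce the same expected-value comparisons on random variables). Then for every measurable U: ν(U) > 0 iff μ_β(U) > 0 for some β; and if ν(U) > 0, then st(ν(V | U)) = μ_j(V | U) where j is the least index with μ_j(U) > 0. -/

import Mathlib

open Classical in
noncomputable def indf {W : Type*} (A : Set W) (q : ℝ) : W → ℝ :=
  fun w => if w ∈ A then q else 0

lemma indf_sum {W : Type*} {L : Type*} [Field L] (m : Set W → L) (h0 : m ∅ = 0)
    (f : ℝ → L) (hf : f 0 = 0) (A : Set W) (q : ℝ) (s : Finset ℝ) (hq : q ∈ s) :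
    ∑ x ∈ s, f x * m (indf A q ⁻¹' {x}) = f q * m A := by
  rw [Finset.sum_eq_single q]
  · by_cases h : q = 0
    · simp [h, hf]
    · have : indf A q ⁻¹' {q} = A := by
        ext w
        simp only [indf, Set.mem_preimage, Set.mem_singleton_iff]
        split_ifs with hw
        · simp [hw]
        · exact iff_of_false (fun e => h e.symm) hw
      rw [this]
  · intro b _ hb
    by_cases h : b = 0
    · simp [h, hf]
    · have : indf A q ⁻¹' {b} = ∅ := by
        ext w
        simp only [indf, Set.mem_preimage, Set.mem_singleton_iff, Set.mem_empty_iff_false,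
          iff_false]
        split_ifs with hw
        · exact fun e => hb e.symm
        · exact fun e => h e.symm
      rw [this, h0, mul_zero]
  · exact fun h => absurd hq h

lemma indf_range {W : Type*} (A : Set W) (q : ℝ) (s : Finset ℝ) (h0 : (0:ℝ) ∈ s)
    (hq : q ∈ s) : Set.range (indf A q) ⊆ ↑s := by
  rintro y ⟨w, rfl⟩
  unfold indf
  split_ifs <;> simpa

lemma indf_memF {W : Type*} {F : Set (Set W)} (huniv : Set.univ ∈ F)
    (hcompl : ∀ U ∈ F, Uᶜ ∈ F) {A : Set W} (hA : A ∈ F) (q : ℝ) :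
    ∀ x, indf A q ⁻¹' {x} ∈ F := by
  intro x
  have hemp : (∅ : Set W) ∈ F := by simpa using hcompl _ huniv
  by_cases hxq : q = x
  · by_cases hx0 : x = 0
    · have : indf A q ⁻¹' {x} = Set.univ := by
        ext w; simp [indf, hxq, hx0]
      rw [this]; exact huniv
    · have : indf A q ⁻¹' {x} = A := by
        ext w
        simp only [indf, Set.mem_preimage, Set.mem_singleton_iff]
        split_ifs with hw
        · simp [hw, hxq]
        · exact iff_of_false (fun e => hx0 e.symm) hw
      rw [this]; exact hA
  · by_cases hx0 : x = 0
    · have : indf A q ⁻¹' {x} = Aᶜ := by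
        ext w
        simp only [indf, Set.mem_preimage, Set.mem_singleton_iff, Set.mem_compl_iff]
        split_ifs with hw
        · exact iff_of_false hxq (fun h => h hw)
        · exact iff_of_true hx0.symm hw
      rw [this]; exact hcompl _ hA
    · have : indf A q ⁻¹' {x} = ∅ := by
        ext w
        simp only [indf, Set.mem_preimage, Set.mem_singleton_iff, Set.mem_empty_iff_false,
          iff_false]
        split_ifs with hw
        · exact hxq
        · exact fun e => hx0 e.symm
      rw [this]; exact hemp

/-- The standard part of an element of an ordered field extension of `ℝ`. -/
noncomputable def stPart {K : Type*} [Field K] [LinearOrder K] [IsStrictOrderedRing K] (ι : ℝ →+* K) (b : K) : ℝ :=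
  sInf {a : ℝ | b ≤ ι a}

def lexLe {I : Type*} [LinearOrder I] (x y : I → ℝ) : Prop :=
  x = y ∨ ∃ i, (∀ j, j < i → x j = y j) ∧ x i < y i

theorem stmt14 {W I : Type*} [LinearOrder I] [WellFoundedLT I]
    {K : Type*} [Field K] [LinearOrder K] [IsStrictOrderedRing K] (ι : ℝ →+* K) (hι : Monotone ι)
    (hna : ∃ η : K, 0 < η ∧ ∀ r : ℝ, 0 < r → η < ι r)
    (F : Set (Set W))
    (huniv : Set.univ ∈ F) (hcompl : ∀ U ∈ F, Uᶜ ∈ F)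
    (hunion : ∀ U ∈ F, ∀ V ∈ F, U ∪ V ∈ F) (hinter : ∀ U ∈ F, ∀ V ∈ F, U ∩ V ∈ F)
    (ν : Set W → K)
    (hνnn : ∀ U ∈ F, 0 ≤ ν U) (hνtot : ν Set.univ = 1)
    (hνadd : ∀ U ∈ F, ∀ V ∈ F, Disjoint U V → ν (U ∪ V) = ν U + ν V)
    (μ : I → Set W → ℝ)
    (hμnn : ∀ i, ∀ U ∈ F, 0 ≤ μ i U) (hμtot : ∀ i, μ i Set.univ = 1)
    (hμadd : ∀ i, ∀ U ∈ F, ∀ V ∈ F, Disjoint U V → μ i (U ∪ V) = μ i U + μ i V)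
    (hequiv : ∀ X Y : W → ℝ, (∀ x, X ⁻¹' {x} ∈ F) → (∀ x, Y ⁻¹' {x} ∈ F) →
      ∀ s : Finset ℝ, Set.range X ⊆ ↑s → Set.range Y ⊆ ↑s →
        ((∑ x ∈ s, ι x * ν (X ⁻¹' {x})) ≤ (∑ x ∈ s, ι x * ν (Y ⁻¹' {x})) ↔
          lexLe (fun i => ∑ x ∈ s, x * μ i (X ⁻¹' {x}))
                (fun i => ∑ x ∈ s, x * μ i (Y ⁻¹' {x})))) :
    ∀ U ∈ F, (0 < ν U ↔ ∃ i, 0 < μ i U) ∧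
      (0 < ν U → ∀ V ∈ F, ∀ j, 0 < μ j U → (∀ i, i < j → μ i U = 0) →
        stPart ι (ν (V ∩ U) / ν U) = μ j (V ∩ U) / μ j U) := by
  have hemp : (∅ : Set W) ∈ F := by simpa using hcompl _ huniv
  have hνemp : ν ∅ = 0 := by
    have h := hνadd ∅ hemp ∅ hemp disjoint_bot_left
    simp only [Set.union_empty] at h
    linarith
  have hμemp : ∀ i, μ i ∅ = 0 := by
    intro i
    have h := hμadd i ∅ hemp ∅ hemp disjoint_bot_left
    simp only [Set.union_empty] at h
    linarith
  have hstrict : StrictMono ι := hι.strictMono_of_injective ι.injective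
  have hmono : ∀ i, ∀ A ∈ F, ∀ B ∈ F, A ⊆ B → μ i A ≤ μ i B := by
    intro i A hA B hB hAB
    have hBA : B ∩ Aᶜ ∈ F := hinter B hB _ (hcompl A hA)
    have hdis : Disjoint A (B ∩ Aᶜ) := by
      refine Set.disjoint_left.mpr ?_
      rintro x hx ⟨-, hx'⟩; exact hx' hx
    have hun : A ∪ (B ∩ Aᶜ) = B := by
      ext x; constructor
      · rintro (h | ⟨h, -⟩); exacts [hAB h, h]
      · intro h; by_cases hxA : x ∈ A
        exacts [Or.inl hxA, Or.inr ⟨h, hxA⟩]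
    have hadd := hμadd i A hA _ hBA hdis
    rw [hun] at hadd
    have := hμnn i _ hBA
    linarith
  intro U hU
  -- Part 1
  have key1 : ν U ≤ 0 ↔ ∀ i, μ i U = 0 := by
    have h := hequiv (indf U 1) (indf ∅ 1) (indf_memF huniv hcompl hU 1)
      (indf_memF huniv hcompl hemp 1) {0, 1}
      (indf_range U 1 _ (by simp) (by simp)) (indf_range ∅ 1 _ (by simp) (by simp))
    rw [indf_sum ν hνemp ι (map_zero ι) U 1 _ (by simp),
        indf_sum ν hνemp ι (map_zero ι) ∅ 1 _ (by simp)] at h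
    have e1 : (fun i => ∑ x ∈ ({0, 1} : Finset ℝ), x * μ i (indf U 1 ⁻¹' {x}))
        = fun i => 1 * μ i U :=
      funext fun i => indf_sum (μ i) (hμemp i) (fun x => x) rfl U 1 _ (by simp)
    have e2 : (fun i => ∑ x ∈ ({0, 1} : Finset ℝ), x * μ i (indf ∅ 1 ⁻¹' {x}))
        = fun i => 1 * μ i (∅ : Set W) :=
      funext fun i => indf_sum (μ i) (hμemp i) (fun x => x) rfl ∅ 1 _ (by simp)
    rw [e1, e2, map_one, one_mul, one_mul, hνemp] at h
    rw [h]
    constructor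
    · rintro (heq | ⟨k, -, hk⟩) i
      · have := congrFun heq i
        simpa [hμemp] using this
      · exfalso
        have h1 := hμnn k U hU
        have h2 := hμemp k
        simp only [one_mul] at hk
        rw [h2] at hk
        linarith
    · intro h
      exact Or.inl (funext fun i => by simp [h i, hμemp])
  have part1 : 0 < ν U ↔ ∃ i, 0 < μ i U := by
    constructor
    · intro hpos
      by_contra hc
      push_neg at hc
      have : ∀ i, μ i U = 0 := fun i => le_antisymm (hc i) (hμnn i U hU)
      have := key1.mpr this
      linarith
    · rintro ⟨i, hi⟩
      by_contra hc
      push_neg at hc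
      have := key1.mp hc i
      linarith
  refine ⟨part1, ?_⟩
  -- Part 2
  intro hνU V hV j hj hleast
  set A := V ∩ U with hA
  have hAF : A ∈ F := hinter V hV U hU
  have hAsub : A ⊆ U := Set.inter_subset_right
  have hzero : ∀ i, i < j → μ i A = 0 := fun i hij =>
    le_antisymm (by rw [← hleast i hij]; exact hmono i A hAF U hU hAsub) (hμnn i A hAF)
  set r := μ j A / μ j U with hr
  have hrmul : r * μ j U = μ j A := div_mul_cancel₀ _ hj.ne'
  have hcomp : ∀ q : ℝ,
      (ι q * ν U ≤ ν A ↔ lexLe (fun i => q * μ i U) (fun i => 1 * μ i A)) := by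
    intro q
    have h := hequiv (indf U q) (indf A 1) (indf_memF huniv hcompl hU q)
      (indf_memF huniv hcompl hAF 1) {0, 1, q}
      (indf_range U q _ (by simp) (by simp)) (indf_range A 1 _ (by simp) (by simp))
    rw [indf_sum ν hνemp ι (map_zero ι) U q _ (by simp),
        indf_sum ν hνemp ι (map_zero ι) A 1 _ (by simp)] at h
    have e1 : (fun i => ∑ x ∈ ({0, 1, q} : Finset ℝ), x * μ i (indf U q ⁻¹' {x}))
        = fun i => q * μ i U :=
      funext fun i => indf_sum (μ i) (hμemp i) (fun x => x) rfl U q _ (by simp)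
    have e2 : (fun i => ∑ x ∈ ({0, 1, q} : Finset ℝ), x * μ i (indf A 1 ⁻¹' {x}))
        = fun i => 1 * μ i A :=
      funext fun i => indf_sum (μ i) (hμemp i) (fun x => x) rfl A 1 _ (by simp)
    rw [e1, e2, map_one, one_mul] at h
    exact h
  have claimA : ∀ q : ℝ, q < r → ι q ≤ ν A / ν U := by
    intro q hq
    have hlex : lexLe (fun i => q * μ i U) (fun i => 1 * μ i A) := by
      refine Or.inr ⟨j, fun i hij => ?_, ?_⟩
      · show q * μ i U = 1 * μ i A
        rw [hleast i hij, hzero i hij]; ring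
      · show q * μ j U < 1 * μ j A
        rw [one_mul, ← hrmul]
        exact mul_lt_mul_of_pos_right hq hj
    have := (hcomp q).mpr hlex
    rw [le_div_iff₀ hνU]
    exact this
  have claimB : ∀ q : ℝ, r < q → ν A / ν U < ι q := by
    intro q hq
    rw [div_lt_iff₀ hνU]
    by_contra hc
    push_neg at hc
    have hlex := (hcomp q).mp hc
    have hne : q * μ j U ≠ 1 * μ j A := by
      rw [one_mul, ← hrmul]
      exact fun e => (mul_right_cancel₀ hj.ne' e ▸ hq).false
    rcases hlex with heq | ⟨i, hlt, hi⟩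
    · exact hne (congrFun heq j)
    · rcases lt_trichotomy i j with h1 | h1 | h1
      · have hi' : q * μ i U < 1 * μ i A := hi
        rw [hleast i h1, hzero i h1] at hi'
        simp at hi'
      · subst h1
        have hi' : q * μ i U < 1 * μ i A := hi
        rw [one_mul, ← hrmul] at hi'
        have := lt_of_mul_lt_mul_right hi' (le_of_lt hj)
        exact absurd hq (not_lt.mpr (le_of_lt this))
      · exact hne (hlt j h1)
  -- conclude
  have hlb : ∀ a ∈ {a : ℝ | ν A / ν U ≤ ι a}, r ≤ a := by
    intro a ha
    by_contra hc
    push_neg at hc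
    have hmid1 : a < (a + r) / 2 := by linarith
    have hmid2 : (a + r) / 2 < r := by linarith
    have h1 := claimA _ hmid2
    have h2 : ι a < ι ((a + r) / 2) := hstrict hmid1
    have h3 : ν A / ν U ≤ ι a := ha
    linarith
  have hne : ({a : ℝ | ν A / ν U ≤ ι a}).Nonempty :=
    ⟨r + 1, le_of_lt (claimB (r + 1) (by linarith))⟩
  rw [stPart]
  refine le_antisymm ?_ (le_csInf hne hlb)
  have hfor : ∀ ε > (0:ℝ), sInf {a : ℝ | ν A / ν U ≤ ι a} ≤ r + ε := fun ε hε =>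
    csInf_le ⟨r, hlb⟩ (le_of_lt (claimB (r + ε) (by linarith)))
  by_contra hc
  push_neg at hc
  have := hfor ((sInf {a : ℝ | ν A / ν U ≤ ι a} - r) / 2) (by linarith)
  linarith
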